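/- Let φ: E → F be an almost interval preserving linear map from a vector lattice E into a normed lattice F, and let I be an ideal in E. Then the norm closure of φ(I) is an ideal in F, and the positive cone of this closure equals the norm closure of φ(I ∩ E⁺). -/

import Mathlib

open Set

/-- If `φ : E → F` is an almost interval preserving linear map from a
vector lattice into a normed lattice and `I` is an ideal in `E`, then the norm closure of
`φ(I)` is an ideal in `F` whose positive cone equals the norm closure of `φ(I ∩ E⁺)`. -/
theorem closure_image_of_ideal_is_ideal
    {E F : Type*}
    [AddCommGroup E] [Lattice E] [CovariantClass E E (· + ·) (· ≤ ·)]
    [Module ℝ E] [PosSMulMono ℝ E]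
    [NormedAddCommGroup F] [Lattice F] [HasSolidNorm F] [IsOrderedAddMonoid F]
    [NormedSpace ℝ F]
    (φ : E →ₗ[ℝ] F)
    (hpos : ∀ x : E, 0 ≤ x → 0 ≤ φ x)
    (haip : ∀ x : E, 0 ≤ x → Icc (0 : F) (φ x) = closure (φ '' Icc 0 x))
    (I : Submodule ℝ E)
    (hI : ∀ x y : E, y ∈ I → |x| ≤ |y| → x ∈ I) :
    ((0 : F) ∈ closure (φ '' (I : Set E)) ∧
      (∀ u v : F, u ∈ closure (φ '' (I : Set E)) → v ∈ closure (φ '' (I : Set E)) →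
        u + v ∈ closure (φ '' (I : Set E))) ∧
      (∀ (c : ℝ) (u : F), u ∈ closure (φ '' (I : Set E)) → c • u ∈ closure (φ '' (I : Set E))) ∧
      (∀ u v : F, v ∈ closure (φ '' (I : Set E)) → |u| ≤ |v| →
        u ∈ closure (φ '' (I : Set E)))) ∧
    {y : F | y ∈ closure (φ '' (I : Set E)) ∧ 0 ≤ y} =
      closure (φ '' {x : E | x ∈ I ∧ 0 ≤ x}) := by
  -- The closure of the image as a submodule
  have hmapcoe : ((I.map φ : Submodule ℝ F) : Set F) = φ '' (I : Set E) := rfl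
  have hJcoe : (((I.map φ).topologicalClosure : Submodule ℝ F) : Set F)
      = closure (φ '' (I : Set E)) := by
    rw [← hmapcoe]; rfl
  have hmem : ∀ u : F, u ∈ closure (φ '' (I : Set E)) ↔ u ∈ (I.map φ).topologicalClosure := by
    intro u; rw [← hJcoe]; rfl
  set S : Set E := {x : E | x ∈ I ∧ 0 ≤ x} with hS
  -- absolute values of elements of I stay in I, positive parts too
  have habsI : ∀ x : E, x ∈ I → |x| ∈ I := fun x hx => hI |x| x hx (by rw [abs_abs])
  have hposI : ∀ x : E, x ∈ I → x⁺ ∈ I := by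
    intro x hx
    refine hI x⁺ x hx ?_
    rw [abs_of_nonneg (posPart_nonneg x)]
    exact sup_le (le_abs_self x) (abs_nonneg x)
  -- order intervals over positive elements of I map into closure of φ '' S
  have hIcc : ∀ w : E, w ∈ I → 0 ≤ w → φ '' Icc 0 w ⊆ φ '' S := by
    rintro w hw hw0 - ⟨z, hz, rfl⟩
    refine ⟨z, ⟨hI z w hw ?_, hz.1⟩, rfl⟩
    rw [abs_of_nonneg hz.1, abs_of_nonneg hw0]; exact hz.2
  have hIccI : ∀ w : E, w ∈ I → 0 ≤ w → Icc (0 : F) (φ w) ⊆ closure (φ '' S) := by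
    intro w hw hw0
    rw [haip w hw0]
    exact closure_mono (hIcc w hw hw0)
  have hSsub : φ '' S ⊆ φ '' (I : Set E) := image_mono fun x hx => hx.1
  -- key: nonneg elements of the closure lie in closure (φ '' S)
  have key1 : ∀ v : F, v ∈ closure (φ '' (I : Set E)) → 0 ≤ v → v ∈ closure (φ '' S) := by
    intro v hv hv0
    rw [← closure_closure (s := φ '' S)]
    rw [Metric.mem_closure_iff] at hv ⊢
    intro ε hε
    obtain ⟨b, hb, hdist⟩ := hv ε hε
    obtain ⟨x, hx, rfl⟩ := hb
    refine ⟨(φ x)⁺, ?_, ?_⟩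
    · refine hIccI x⁺ (hposI x hx) (posPart_nonneg x) ⟨posPart_nonneg _, ?_⟩
      have h1 : φ x ≤ φ x⁺ := by
        have := hpos (x⁺ - x) (by simpa using le_posPart x)
        rw [map_sub] at this; exact sub_nonneg.mp this
      have h2 : (0 : F) ≤ φ x⁺ := hpos _ (posPart_nonneg x)
      exact sup_le h1 h2
    · calc dist v (φ x)⁺ = ‖v⁺ - (φ x)⁺‖ := by rw [dist_eq_norm, posPart_eq_self.2 hv0]
        _ ≤ ‖v - φ x‖ := norm_sup_sub_sup_le_norm v (φ x) 0
        _ < ε := by rwa [dist_eq_norm] at hdist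
  -- key: closure of image is closed under absolute value
  have key2 : ∀ v : F, v ∈ closure (φ '' (I : Set E)) → |v| ∈ closure (φ '' (I : Set E)) := by
    intro v hv
    rw [← closure_closure (s := φ '' (I : Set E))]
    rw [Metric.mem_closure_iff] at hv ⊢
    intro ε hε
    obtain ⟨b, hb, hdist⟩ := hv ε hε
    obtain ⟨x, hx, rfl⟩ := hb
    refine ⟨|φ x|, ?_, ?_⟩
    · have h1 : |φ x| ≤ φ |x| := by
        have hle : φ x ≤ φ |x| := by
          have := hpos (|x| - x) (by simpa using le_abs_self x)
          rw [map_sub] at this; exact sub_nonneg.mp this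
        have hle' : -φ x ≤ φ |x| := by
          have := hpos (|x| + x)
            (by rw [← sub_neg_eq_add, sub_nonneg]; exact neg_le_abs x)
          rw [map_add, ← sub_neg_eq_add] at this
          exact sub_nonneg.mp this
        exact abs_le'.2 ⟨hle, hle'⟩
      have := hIccI |x| (habsI x hx) (abs_nonneg x) ⟨abs_nonneg _, h1⟩
      exact closure_mono hSsub this
    · calc dist |v| |φ x| = ‖|v| - |φ x|‖ := by rw [dist_eq_norm]
        _ ≤ ‖v - φ x‖ := norm_abs_sub_abs v (φ x)
        _ < ε := by rwa [dist_eq_norm] at hdist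
  -- key: positive part of a dominated element
  have key3 : ∀ u v : F, v ∈ closure (φ '' (I : Set E)) → |u| ≤ |v| →
      u⁺ ∈ closure (φ '' (I : Set E)) := by
    intro u v hv huv
    have habs : |v| ∈ closure (φ '' S) := key1 |v| (key2 v hv) (abs_nonneg v)
    rw [← closure_closure (s := φ '' (I : Set E))]
    rw [Metric.mem_closure_iff] at habs ⊢
    intro ε hε
    obtain ⟨b, hb, hdist⟩ := habs ε hε
    obtain ⟨w, ⟨hwI, hw0⟩, rfl⟩ := hb
    refine ⟨u⁺ ⊓ φ w, ?_, ?_⟩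
    · have h1 : (0 : F) ≤ u⁺ ⊓ φ w := le_inf (posPart_nonneg u) (hpos w hw0)
      have := hIccI w hwI hw0 ⟨h1, inf_le_right⟩
      exact closure_mono hSsub this
    · have heq : u⁺ - u⁺ ⊓ φ w = (u⁺ - φ w)⁺ := by
        rw [sub_inf, sub_self, sup_comm]; exact (posPart_def _).symm
      have hle : (u⁺ - φ w)⁺ ≤ (|v| - φ w)⁺ := by
        have h0 : u⁺ ≤ |v| := le_trans (sup_le (le_abs_self u) (abs_nonneg u)) huv
        exact posPart_mono (by gcongr)
      have hle2 : (|v| - φ w)⁺ ≤ |(|v| - φ w)| :=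
        sup_le (le_abs_self _) (abs_nonneg _)
      have hnn : (0 : F) ≤ u⁺ - u⁺ ⊓ φ w := by simp
      calc dist u⁺ (u⁺ ⊓ φ w) = ‖u⁺ - u⁺ ⊓ φ w‖ := by rw [dist_eq_norm]
        _ ≤ ‖|v| - φ w‖ := by
            apply HasSolidNorm.solid
            rw [abs_of_nonneg hnn, heq]
            exact hle.trans hle2
        _ < ε := by rwa [dist_eq_norm] at hdist
  constructor
  · refine ⟨?_, ?_, ?_, ?_⟩
    · exact subset_closure ⟨0, I.zero_mem, map_zero φ⟩
    · intro u v hu hv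
      rw [hmem] at hu hv ⊢
      exact Submodule.add_mem _ hu hv
    · intro c u hu
      rw [hmem] at hu ⊢
      exact Submodule.smul_mem _ c hu
    · intro u v hv huv
      have h1 := key3 u v hv huv
      have h2 := key3 (-u) v hv (by rwa [abs_neg])
      rw [posPart_neg] at h2
      have : u⁺ - u⁻ = u := posPart_sub_negPart u
      rw [hmem] at h1 h2 ⊢
      rw [← this]
      exact Submodule.sub_mem _ h1 h2
  · apply Subset.antisymm
    · rintro y ⟨hy, hy0⟩
      exact key1 y hy hy0
    · intro y hy
      refine ⟨closure_mono hSsub hy, ?_⟩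
      have hcl : closure (φ '' S) ⊆ {z : F | 0 ≤ z} := by
        apply closure_minimal
        · rintro - ⟨x, ⟨-, hx0⟩, rfl⟩
          exact hpos x hx0
        · exact isClosed_Ici (a := (0 : F))
      exact hcl hy
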